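/- Let 0 < μ_b ≤ μ_a < μ_1 < 1. Then for every x ≥ 0, g_a(x) ≤ g_b(x), where g_c(x) = kl(μ_1, m_c(x)) + x·kl(μ_c, m_c(x)) and m_c(x) = (μ_1 + x·μ_c)/(1+x). Consequently, for every y in the common domain [0, kl(μ_1,μ_a)) of the inverse functions, g_a^{-1}(y) ≥ g_b^{-1}(y). -/

import Mathlib

/-- Bernoulli Kullback–Leibler divergence. -/
noncomputable def kl (x y : ℝ) : ℝ :=
  x * Real.log (x / y) + (1 - x) * Real.log ((1 - x) / (1 - y))

/-- The weighted mean `m_c(x) = (μ₁ + x μ_c)/(1+x)`. -/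
noncomputable def marm (μ1 μc x : ℝ) : ℝ := (μ1 + x * μc) / (1 + x)

/-- The function `g_c(x) = kl(μ₁, m_c(x)) + x·kl(μ_c, m_c(x))`. -/
noncomputable def garm (μ1 μc x : ℝ) : ℝ :=
  kl μ1 (marm μ1 μc x) + x * kl μc (marm μ1 μc x)

private noncomputable def ent (t : ℝ) : ℝ := t * Real.log t + (1 - t) * Real.log (1 - t)

private lemma kl_expand {a b : ℝ} (ha0 : 0 < a) (ha1 : a < 1) (hb0 : 0 < b) (hb1 : b < 1) :
    kl a b = a * (Real.log a - Real.log b) + (1 - a) * (Real.log (1 - a) - Real.log (1 - b)) := by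
  unfold kl
  rw [Real.log_div ha0.ne' hb0.ne', Real.log_div (by linarith) (by linarith)]

private lemma kl_nonneg {a b : ℝ} (ha0 : 0 < a) (ha1 : a < 1) (hb0 : 0 < b) (hb1 : b < 1) :
    0 ≤ kl a b := by
  have h1 : Real.log (b / a) ≤ b / a - 1 := Real.log_le_sub_one_of_pos (by positivity)
  have h2 : Real.log ((1 - b) / (1 - a)) ≤ (1 - b) / (1 - a) - 1 :=
    Real.log_le_sub_one_of_pos (by apply div_pos <;> linarith)
  have e1 : Real.log (a / b) = - Real.log (b / a) := by
    rw [← Real.log_inv, inv_div]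
  have e2 : Real.log ((1 - a) / (1 - b)) = - Real.log ((1 - b) / (1 - a)) := by
    rw [← Real.log_inv, inv_div]
  unfold kl
  rw [e1, e2]
  have h1' : a * Real.log (b / a) ≤ b - a := by
    have := mul_le_mul_of_nonneg_left h1 ha0.le
    have k1 : a * (b / a - 1) = b - a := by field_simp
    linarith
  have h2' : (1 - a) * Real.log ((1 - b) / (1 - a)) ≤ a - b := by
    have := mul_le_mul_of_nonneg_left h2 (by linarith : (0:ℝ) ≤ 1 - a)
    have hne : (1:ℝ) - a ≠ 0 := by linarith
    have k2 : (1 - a) * ((1 - b) / (1 - a) - 1) = a - b := by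
      field_simp
      ring
    linarith
  linarith

private lemma kl_pos {a b : ℝ} (ha0 : 0 < a) (ha1 : a < 1) (hb0 : 0 < b) (hb1 : b < 1)
    (hab : a ≠ b) : 0 < kl a b := by
  have h1 : Real.log (b / a) < b / a - 1 :=
    Real.log_lt_sub_one_of_pos (by positivity) (by
      intro h; apply hab; field_simp at h; linarith)
  have h2 : Real.log ((1 - b) / (1 - a)) < (1 - b) / (1 - a) - 1 :=
    Real.log_lt_sub_one_of_pos (by apply div_pos <;> linarith) (by
      intro h; apply hab
      rw [div_eq_one_iff_eq (by linarith)] at h; linarith)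
  have e1 : Real.log (a / b) = - Real.log (b / a) := by
    rw [← Real.log_inv, inv_div]
  have e2 : Real.log ((1 - a) / (1 - b)) = - Real.log ((1 - b) / (1 - a)) := by
    rw [← Real.log_inv, inv_div]
  unfold kl
  rw [e1, e2]
  have h1' : a * Real.log (b / a) < b - a := by
    have := mul_lt_mul_of_pos_left h1 ha0
    have k1 : a * (b / a - 1) = b - a := by field_simp
    linarith
  have h2' : (1 - a) * Real.log ((1 - b) / (1 - a)) < a - b := by
    have := mul_lt_mul_of_pos_left h2 (by linarith : (0:ℝ) < 1 - a)
    have hne : (1:ℝ) - a ≠ 0 := by linarith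
    have k2 : (1 - a) * ((1 - b) / (1 - a) - 1) = a - b := by
      field_simp
      ring
    linarith
  linarith

private lemma marm_mem {μ1 c x : ℝ} (hc0 : 0 < c) (hc1 : c < μ1) (h1 : μ1 < 1) (hx : 0 ≤ x) :
    c < marm μ1 c x ∧ marm μ1 c x ≤ μ1 ∧ 0 < marm μ1 c x ∧ marm μ1 c x < 1 := by
  have hx1 : (0:ℝ) < 1 + x := by linarith
  unfold marm
  refine ⟨?_, ?_, ?_, ?_⟩
  · rw [lt_div_iff₀ hx1]; nlinarith
  · rw [div_le_iff₀ hx1]; nlinarith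
  · apply div_pos _ hx1; nlinarith
  · rw [div_lt_iff₀ hx1]; nlinarith

private lemma garm_eq_ent {μ1 c x : ℝ} (hc0 : 0 < c) (hc1 : c < μ1) (h1 : μ1 < 1) (hx : 0 ≤ x) :
    garm μ1 c x = ent μ1 + (x * ent c - (1 + x) * ent (marm μ1 c x)) := by
  obtain ⟨hm1, hm2, hm3, hm4⟩ := marm_mem hc0 hc1 h1 hx
  have hx1 : (0:ℝ) < 1 + x := by linarith
  have hm : (1 + x) * marm μ1 c x = μ1 + x * c := by
    unfold marm; field_simp
  unfold garm ent
  rw [kl_expand (by linarith) h1 hm3 hm4, kl_expand hc0 (by linarith) hm3 hm4]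
  linear_combination (Real.log (marm μ1 c x) - Real.log (1 - marm μ1 c x)) * hm

/-- decomposition: kl μ1 q + x kl c q = garm + (1+x) kl(m, q). -/
private lemma garm_decomp {μ1 c x q : ℝ} (hc0 : 0 < c) (hc1 : c < μ1) (h1 : μ1 < 1) (hx : 0 ≤ x)
    (hq0 : 0 < q) (hq1 : q < 1) :
    kl μ1 q + x * kl c q = garm μ1 c x + (1 + x) * kl (marm μ1 c x) q := by
  obtain ⟨hm1, hm2, hm3, hm4⟩ := marm_mem hc0 hc1 h1 hx
  have hm : (1 + x) * marm μ1 c x = μ1 + x * c := by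
    unfold marm; field_simp
  unfold garm
  rw [kl_expand (by linarith) h1 hq0 hq1, kl_expand hc0 (by linarith) hq0 hq1,
    kl_expand (by linarith) h1 hm3 hm4, kl_expand hc0 (by linarith) hm3 hm4,
    kl_expand hm3 hm4 hq0 hq1]
  linear_combination (Real.log q + Real.log (1 - marm μ1 c x) - Real.log (1 - q)
    - Real.log (marm μ1 c x)) * hm

private lemma ent_hasDerivAt {t : ℝ} (ht0 : 0 < t) (ht1 : t < 1) :
    HasDerivAt ent (Real.log t - Real.log (1 - t)) t := by
  have h1 : HasDerivAt (fun s : ℝ => s * Real.log s) (Real.log t + 1) t :=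
    Real.hasDerivAt_mul_log ht0.ne'
  have h2 : HasDerivAt (fun s : ℝ => (1 - s) * Real.log (1 - s))
      ((Real.log (1 - t) + 1) * (-1)) t := by
    have hinner : HasDerivAt (fun s : ℝ => 1 - s) (-1) t := by
      simpa using (hasDerivAt_id t).const_sub 1
    exact (Real.hasDerivAt_mul_log (by linarith : (1:ℝ) - t ≠ 0)).comp t hinner
  have := h1.add h2
  have e : Real.log t - Real.log (1 - t) = Real.log t + 1 + (Real.log (1 - t) + 1) * -1 := by ring
  rw [e]; exact this

private lemma garm_anti (μ1 x : ℝ) (h1 : μ1 < 1) (hx : 0 ≤ x) :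
    AntitoneOn (fun c => x * ent c - (1 + x) * ent ((μ1 + x * c) / (1 + x)))
      (Set.Ioo 0 μ1) := by
  have hx1 : (0:ℝ) < 1 + x := by linarith
  set F := fun c => x * ent c - (1 + x) * ent ((μ1 + x * c) / (1 + x)) with hF
  have hD : ∀ c ∈ Set.Ioo (0:ℝ) μ1, HasDerivAt F
      (x * (Real.log c - Real.log (1 - c))
        - (1 + x) * ((Real.log ((μ1 + x * c) / (1 + x))
          - Real.log (1 - (μ1 + x * c) / (1 + x))) * (x / (1 + x)))) c := by
    intro c hc
    obtain ⟨hc0, hc1⟩ := hc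
    obtain ⟨hm1, hm2, hm3, hm4⟩ := marm_mem hc0 hc1 h1 hx
    have hmm : HasDerivAt (fun c : ℝ => (μ1 + x * c) / (1 + x)) (x / (1 + x)) c := by
      have : HasDerivAt (fun c : ℝ => μ1 + x * c) x c := by
        simpa using ((hasDerivAt_id c).const_mul x).const_add μ1
      simpa using this.div_const (1 + x)
    have h2 := ((ent_hasDerivAt hm3 hm4).comp c hmm)
    exact ((ent_hasDerivAt hc0 (by linarith : c < 1)).const_mul x).sub (h2.const_mul (1 + x))
  apply antitoneOn_of_deriv_nonpos (convex_Ioo 0 μ1)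
  · exact fun c hc => ((hD c hc).continuousAt).continuousWithinAt
  · rw [interior_Ioo]
    exact fun c hc => ((hD c hc).differentiableAt).differentiableWithinAt
  · rw [interior_Ioo]
    intro c hc
    rw [(hD c hc).deriv]
    obtain ⟨hc0, hc1⟩ := hc
    obtain ⟨hm1, hm2, hm3, hm4⟩ := marm_mem hc0 hc1 h1 hx
    unfold marm at hm1 hm2 hm3 hm4
    have key : (1 + x) * ((Real.log ((μ1 + x * c) / (1 + x))
        - Real.log (1 - (μ1 + x * c) / (1 + x))) * (x / (1 + x)))
        = x * (Real.log ((μ1 + x * c) / (1 + x)) - Real.log (1 - (μ1 + x * c) / (1 + x))) := by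
      field_simp
    rw [key]
    have l1 : Real.log c ≤ Real.log ((μ1 + x * c) / (1 + x)) :=
      Real.log_le_log hc0 hm1.le
    have l2 : Real.log (1 - (μ1 + x * c) / (1 + x)) ≤ Real.log (1 - c) :=
      Real.log_le_log (by linarith) (by linarith)
    have : Real.log c - Real.log (1 - c)
        - (Real.log ((μ1 + x * c) / (1 + x)) - Real.log (1 - (μ1 + x * c) / (1 + x))) ≤ 0 := by
      linarith
    nlinarith

/-- if `μ_b ≤ μ_a < μ₁` then `g_a ≤ g_b` pointwise on `[0,∞)`, and
consequently the inverse functions satisfy `g_a⁻¹(y) ≥ g_b⁻¹(y)` on the common domain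
`[0, kl(μ₁,μ_a))` (stated via arbitrary preimages `xa, xb ≥ 0` of `y`). -/
theorem garm_comparison (μ1 μa μb : ℝ)
    (h0 : 0 < μb) (hba : μb ≤ μa) (ha1 : μa < μ1) (h1 : μ1 < 1) :
    (∀ x : ℝ, 0 ≤ x → garm μ1 μa x ≤ garm μ1 μb x) ∧
    ∀ y ∈ Set.Ico 0 (kl μ1 μa), ∀ xa xb : ℝ, 0 ≤ xa → 0 ≤ xb →
      garm μ1 μa xa = y → garm μ1 μb xb = y → xb ≤ xa := by
  have hb1 : μb < μ1 := lt_of_le_of_lt hba ha1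
  have ha0 : 0 < μa := lt_of_lt_of_le h0 hba
  have part1 : ∀ x : ℝ, 0 ≤ x → garm μ1 μa x ≤ garm μ1 μb x := by
    intro x hx
    rw [garm_eq_ent ha0 ha1 h1 hx, garm_eq_ent h0 hb1 h1 hx]
    have := garm_anti μ1 x h1 hx ⟨h0, hb1⟩ ⟨ha0, ha1⟩ hba
    simp only [marm]
    linarith
  refine ⟨part1, ?_⟩
  rintro y - xa xb hxa hxb hga hgb
  by_contra hlt
  push_neg at hlt
  -- xa < xb ; derive garm μ1 μb xb > garm μ1 μb xa ≥ garm μ1 μa xa, contradiction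
  set m2 := marm μ1 μb xb with hm2def
  obtain ⟨hm1, hm2b, hm3, hm4⟩ := marm_mem h0 hb1 h1 hxb
  have hklpos : 0 < kl μb m2 := kl_pos h0 (by linarith) hm3 hm4 hm1.ne
  have hdec := garm_decomp h0 hb1 h1 hxa hm3 hm4
  have hzero : kl m2 m2 = 0 := by
    unfold kl
    rw [div_self hm3.ne', div_self (by linarith : (1:ℝ) - m2 ≠ 0), Real.log_one]
    ring
  have hgbxb : garm μ1 μb xb = kl μ1 m2 + xb * kl μb m2 := rfl
  have hklm : 0 ≤ kl (marm μ1 μb xa) m2 := by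
    obtain ⟨h1', h2', h3', h4'⟩ := marm_mem h0 hb1 h1 hxa
    exact kl_nonneg h3' h4' hm3 hm4
  have : garm μ1 μb xa < garm μ1 μb xb := by
    rw [hgbxb]
    nlinarith
  have hpa := part1 xa hxa
  linarith [hga, hgb]
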